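/- The stationary density p is invariant under the generator: for every twice continuously differentiable f : ℝ → ℝ with compact support, ∫ℝ [(σ²/2)f''(z) + λ(f(γ)-f(z))1{z>γ} + λ(f(-γ)-f(z))1{z<-γ}] p(z) dz = 0, where p is the piecewise uniform-exponential density from the paper. -/

import Mathlib

open MeasureTheory Real Filter Set Topology

theorem stationary_generator_identity
    (σ lam γ : ℝ) (hσ : 0 < σ) (hlam : 0 < lam) (hγ : 0 < γ)
    (η : ℝ) (hη : η = Real.sqrt (2 * lam) * γ / σ)
    (π₀ : ℝ) (hπ₀ : π₀ = η / (1 + η))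
    (πp : ℝ) (hπp : πp = 1 / (2 * (1 + η)))
    (p : ℝ → ℝ)
    (hp : ∀ z, p z = if |z| ≤ γ then π₀ / (2 * γ)
        else πp * (η / γ) * Real.exp (-(η / γ) * (|z| - γ)))
    (f : ℝ → ℝ) (hf : ContDiff ℝ 2 f) (hsupp : HasCompactSupport f) :
    ∫ z : ℝ,
        ((σ ^ 2 / 2) * deriv (deriv f) z
          + (if γ < z then lam * (f γ - f z) else 0)
          + (if z < -γ then lam * (f (-γ) - f z) else 0)) * p z = 0 := by
  have hσ0 : σ ≠ 0 := ne_of_gt hσ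
  have hγ0 : γ ≠ 0 := ne_of_gt hγ
  have hηpos : 0 < η := by
    rw [hη]; positivity
  have h1η : (0:ℝ) < 1 + η := by linarith
  obtain ⟨a, ha_def⟩ : ∃ a : ℝ, a = η / γ := ⟨_, rfl⟩
  have hapos : 0 < a := ha_def ▸ div_pos hηpos hγ
  have ha0 : a ≠ 0 := ne_of_gt hapos
  have ha2 : σ ^ 2 / 2 * a ^ 2 = lam := by
    have hav : a = Real.sqrt (2 * lam) / σ := by
      rw [ha_def, hη]; field_simp
    rw [hav, div_pow, Real.sq_sqrt (by linarith)]
    field_simp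
  obtain ⟨c0, hc0_def⟩ : ∃ c : ℝ, c = π₀ / (2 * γ) := ⟨_, rfl⟩
  have hc0pos : 0 < c0 := by
    rw [hc0_def, hπ₀]; positivity
  have hc0 : πp * a = c0 := by
    rw [hπp, hc0_def, hπ₀, ha_def]; field_simp
  have hdiv : ∀ b : ℝ, σ ^ 2 / 2 * a ^ 2 * b / a = σ ^ 2 / 2 * a * b := by
    intro b; field_simp
  -- derivative facts
  have hf2 : ContDiff ℝ (1+1 : WithTop ℕ∞) f := by
    rw [show ((1:WithTop ℕ∞)+1) = 2 from by norm_num]; exact hf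
  have hfd : Differentiable ℝ f := hf.differentiable (by norm_num)
  have hf' : ContDiff ℝ 1 (deriv f) := by
    rw [contDiff_succ_iff_deriv] at hf2
    exact hf2.2.2
  have hf'd : Differentiable ℝ (deriv f) := hf'.differentiable (by norm_num)
  have hf'c : Continuous (deriv f) := hf'.continuous
  have hf''c : Continuous (deriv (deriv f)) := hf'.continuous_deriv le_rfl
  have hfc : Continuous f := hf.continuous
  have hs' : HasCompactSupport (deriv f) := hsupp.deriv
  have hs'' : HasCompactSupport (deriv (deriv f)) := hs'.deriv
  -- eventual vanishing
  have hftop : ∀ᶠ z in atTop, f z = 0 := by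
    have := hasCompactSupport_iff_eventuallyEq.mp hsupp
    rw [Filter.coclosedCompact_eq_cocompact] at this
    exact this.filter_mono _root_.atTop_le_cocompact
  have hf'top : ∀ᶠ z in atTop, deriv f z = 0 := by
    have := hasCompactSupport_iff_eventuallyEq.mp hs'
    rw [Filter.coclosedCompact_eq_cocompact] at this
    exact this.filter_mono _root_.atTop_le_cocompact
  have hfbot : ∀ᶠ z in atBot, f z = 0 := by
    have := hasCompactSupport_iff_eventuallyEq.mp hsupp
    rw [Filter.coclosedCompact_eq_cocompact] at this
    exact this.filter_mono _root_.atBot_le_cocompact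
  have hf'bot : ∀ᶠ z in atBot, deriv f z = 0 := by
    have := hasCompactSupport_iff_eventuallyEq.mp hs'
    rw [Filter.coclosedCompact_eq_cocompact] at this
    exact this.filter_mono _root_.atBot_le_cocompact
  -- weights
  obtain ⟨wp, hwp⟩ : ∃ w : ℝ → ℝ, w = fun z => c0 * Real.exp (-a * (z - γ)) := ⟨_, rfl⟩
  obtain ⟨wm, hwm⟩ : ∃ w : ℝ → ℝ, w = fun z => c0 * Real.exp (a * (z + γ)) := ⟨_, rfl⟩
  have hwpc : Continuous wp := by rw [hwp]; fun_prop
  have hwmc : Continuous wm := by rw [hwm]; fun_prop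
  have hwpγ : wp γ = c0 := by rw [hwp]; simp
  have hwmγ : wm (-γ) = c0 := by rw [hwm]; simp
  have hwpd : ∀ z : ℝ, HasDerivAt wp (-a * wp z) z := by
    intro z
    have h1 : HasDerivAt (fun y : ℝ => -a * (y - γ)) (-a) z := by
      simpa using ((hasDerivAt_id z).sub_const γ).const_mul (-a)
    have h2 := (h1.exp).const_mul c0
    rw [hwp]
    refine h2.congr_deriv ?_
    ring
  have hwmd : ∀ z : ℝ, HasDerivAt wm (a * wm z) z := by
    intro z
    have h1 : HasDerivAt (fun y : ℝ => a * (y + γ)) a z := by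
      simpa using ((hasDerivAt_id z).add_const γ).const_mul a
    have h2 := (h1.exp).const_mul c0
    rw [hwm]
    refine h2.congr_deriv ?_
    ring
  -- limits of weights
  have hwp0 : Tendsto wp atTop (𝓝 0) := by
    have h1 : Tendsto (fun z : ℝ => -a * (z - γ)) atTop atBot := by
      apply Tendsto.const_mul_atTop_of_neg (neg_lt_zero.mpr hapos)
      exact tendsto_atTop_add_const_right _ _ tendsto_id
    have h2 := Real.tendsto_exp_atBot.comp h1
    rw [hwp]
    simpa using h2.const_mul c0
  have hwm0 : Tendsto wm atBot (𝓝 0) := by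
    have h1 : Tendsto (fun z : ℝ => a * (z + γ)) atBot atBot := by
      apply Tendsto.const_mul_atBot hapos
      exact tendsto_atBot_add_const_right _ _ tendsto_id
    have h2 := Real.tendsto_exp_atBot.comp h1
    rw [hwm]
    simpa using h2.const_mul c0
  -- integrability of weights
  have hwpint : IntegrableOn wp (Ioi γ) := by
    have h := ((exp_neg_integrableOn_Ioi γ hapos).const_mul (c0 * Real.exp (a * γ)))
    refine IntegrableOn.congr_fun h (fun z _ => ?_) measurableSet_Ioi
    simp only [hwp]
    rw [show -a * (z - γ) = a * γ + -a * z from by ring, Real.exp_add]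
    ring
  have hwmint : IntegrableOn wm (Iic (-γ)) := by
    have h := exp_neg_integrableOn_Ioi (-(-γ)) hapos
    have h2 := (MeasurePreserving.integrableOn_comp_preimage
      (Measure.measurePreserving_neg (volume : Measure ℝ))
      (Homeomorph.neg ℝ).measurableEmbedding).2 h
    have hset : (Neg.neg ⁻¹' Ioi (-(-γ)) : Set ℝ) = Iio (-γ) := by
      ext x; simp
    rw [hset] at h2
    have h3 : IntegrableOn (fun z : ℝ => Real.exp (a * z)) (Iio (-γ)) := by
      refine IntegrableOn.congr_fun h2 (fun z _ => ?_) measurableSet_Iio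
      simp [Function.comp]
    have h4 : IntegrableOn (fun z : ℝ => Real.exp (a * z)) (Iic (-γ)) :=
      (integrableOn_Iic_iff_integrableOn_Iio (μ := volume)).2 h3
    refine IntegrableOn.congr_fun (h4.const_mul (c0 * Real.exp (a * γ)))
      (fun z _ => ?_) measurableSet_Iic
    simp only [hwm]
    rw [show a * (z + γ) = a * γ + a * z from by ring, Real.exp_add]
    ring
  -- right tail integral
  have hcs1 : HasCompactSupport (fun z => deriv (deriv f) z * wp z) := hs''.mul_right
  have hcs2 : HasCompactSupport (fun z => f z * wp z) := hsupp.mul_right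
  have hcs3 : HasCompactSupport (fun z => deriv (deriv f) z * wm z) := hs''.mul_right
  have hcs4 : HasCompactSupport (fun z => f z * wm z) := hsupp.mul_right
  have hIoi_int : IntegrableOn
      (fun z => (σ ^ 2 / 2 * deriv (deriv f) z + lam * (f γ - f z)) * wp z) (Ioi γ) := by
    have i1 : Integrable (fun z => σ ^ 2 / 2 * (deriv (deriv f) z * wp z)) :=
      ((hf''c.mul hwpc).integrable_of_hasCompactSupport hcs1).const_mul _
    have i2 : IntegrableOn (fun z => (lam * f γ) * wp z) (Ioi γ) := hwpint.const_mul _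
    have i3 : Integrable (fun z => lam * (f z * wp z)) :=
      ((hfc.mul hwpc).integrable_of_hasCompactSupport hcs2).const_mul _
    exact IntegrableOn.congr_fun ((i1.integrableOn.add i2).sub i3.integrableOn)
      (fun z _ => by simp only [Pi.add_apply, Pi.sub_apply]; ring) measurableSet_Ioi
  have hGp : ∀ z : ℝ, HasDerivAt
      (fun y => (σ ^ 2 / 2 * deriv f y + σ ^ 2 / 2 * a * f y - lam * f γ / a) * wp y)
      ((σ ^ 2 / 2 * deriv (deriv f) z + lam * (f γ - f z)) * wp z) z := by
    intro z
    have hu : HasDerivAt (fun y => σ ^ 2 / 2 * deriv f y + σ ^ 2 / 2 * a * f y - lam * f γ / a)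
        (σ ^ 2 / 2 * deriv (deriv f) z + σ ^ 2 / 2 * a * deriv f z) z := by
      have h1 := ((hf'd z).hasDerivAt.const_mul (σ ^ 2 / 2))
      have h2 := ((hfd z).hasDerivAt.const_mul (σ ^ 2 / 2 * a))
      simpa using (h1.add h2).sub_const (lam * f γ / a)
    have h := hu.mul (hwpd z)
    refine h.congr_deriv ?_
    rw [← ha2, hdiv]
    ring
  have hGptend : Tendsto
      (fun y => (σ ^ 2 / 2 * deriv f y + σ ^ 2 / 2 * a * f y - lam * f γ / a) * wp y)
      atTop (𝓝 0) := by
    have hev : (fun y : ℝ => (-(lam * f γ / a)) * wp y) =ᶠ[atTop]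
        (fun y => (σ ^ 2 / 2 * deriv f y + σ ^ 2 / 2 * a * f y - lam * f γ / a) * wp y) := by
      filter_upwards [hftop, hf'top] with z h1 h2
      rw [h1, h2]; ring
    have h0 : Tendsto (fun y : ℝ => (-(lam * f γ / a)) * wp y) atTop (𝓝 0) := by
      simpa using hwp0.const_mul (-(lam * f γ / a))
    exact h0.congr' hev
  have hIoi_val : ∫ z in Ioi γ, (σ ^ 2 / 2 * deriv (deriv f) z + lam * (f γ - f z)) * wp z
      = -(σ ^ 2 / 2 * c0 * deriv f γ) := by
    rw [integral_Ioi_of_hasDerivAt_of_tendsto' (fun x _ => hGp x) hIoi_int hGptend]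
    rw [hwpγ, ← ha2, hdiv]
    ring
  -- left tail integral
  have hIic_int : IntegrableOn
      (fun z => (σ ^ 2 / 2 * deriv (deriv f) z + lam * (f (-γ) - f z)) * wm z) (Iic (-γ)) := by
    have i1 : Integrable (fun z => σ ^ 2 / 2 * (deriv (deriv f) z * wm z)) :=
      ((hf''c.mul hwmc).integrable_of_hasCompactSupport hcs3).const_mul _
    have i2 : IntegrableOn (fun z => (lam * f (-γ)) * wm z) (Iic (-γ)) := hwmint.const_mul _
    have i3 : Integrable (fun z => lam * (f z * wm z)) :=
      ((hfc.mul hwmc).integrable_of_hasCompactSupport hcs4).const_mul _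
    exact IntegrableOn.congr_fun ((i1.integrableOn.add i2).sub i3.integrableOn)
      (fun z _ => by simp only [Pi.add_apply, Pi.sub_apply]; ring) measurableSet_Iic
  have hGm : ∀ z : ℝ, HasDerivAt
      (fun y => (σ ^ 2 / 2 * deriv f y - σ ^ 2 / 2 * a * f y + lam * f (-γ) / a) * wm y)
      ((σ ^ 2 / 2 * deriv (deriv f) z + lam * (f (-γ) - f z)) * wm z) z := by
    intro z
    have hu : HasDerivAt
        (fun y => σ ^ 2 / 2 * deriv f y - σ ^ 2 / 2 * a * f y + lam * f (-γ) / a)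
        (σ ^ 2 / 2 * deriv (deriv f) z - σ ^ 2 / 2 * a * deriv f z) z := by
      have h1 := ((hf'd z).hasDerivAt.const_mul (σ ^ 2 / 2))
      have h2 := ((hfd z).hasDerivAt.const_mul (σ ^ 2 / 2 * a))
      simpa using (h1.sub h2).add_const (lam * f (-γ) / a)
    have h := hu.mul (hwmd z)
    refine h.congr_deriv ?_
    rw [← ha2, hdiv]
    ring
  have hGmtend : Tendsto
      (fun y => (σ ^ 2 / 2 * deriv f y - σ ^ 2 / 2 * a * f y + lam * f (-γ) / a) * wm y)
      atBot (𝓝 0) := by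
    have hev : (fun y : ℝ => (lam * f (-γ) / a) * wm y) =ᶠ[atBot]
        (fun y => (σ ^ 2 / 2 * deriv f y - σ ^ 2 / 2 * a * f y + lam * f (-γ) / a) * wm y) := by
      filter_upwards [hfbot, hf'bot] with z h1 h2
      rw [h1, h2]; ring
    have h0 : Tendsto (fun y : ℝ => (lam * f (-γ) / a) * wm y) atBot (𝓝 0) := by
      simpa using hwm0.const_mul (lam * f (-γ) / a)
    exact h0.congr' hev
  have hIic_val : ∫ z in Iic (-γ), (σ ^ 2 / 2 * deriv (deriv f) z + lam * (f (-γ) - f z)) * wm z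
      = σ ^ 2 / 2 * c0 * deriv f (-γ) := by
    rw [integral_Iic_of_hasDerivAt_of_tendsto' (fun x _ => hGm x) hIic_int hGmtend]
    rw [hwmγ, ← ha2, hdiv]
    ring
  -- middle integral
  have hmid_int : IntegrableOn (fun z => (σ ^ 2 / 2 * deriv (deriv f) z) * c0) (Ioc (-γ) γ) := by
    apply Continuous.integrableOn_Ioc
    fun_prop
  have hmid_val : ∫ z in Ioc (-γ) γ, (σ ^ 2 / 2 * deriv (deriv f) z) * c0
      = σ ^ 2 / 2 * c0 * (deriv f γ - deriv f (-γ)) := by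
    rw [← intervalIntegral.integral_of_le (by linarith : -γ ≤ γ)]
    have heq : ∀ z : ℝ, (σ ^ 2 / 2 * deriv (deriv f) z) * c0
        = (σ ^ 2 / 2 * c0) * deriv (deriv f) z := fun z => by ring
    simp_rw [heq]
    rw [intervalIntegral.integral_const_mul,
      intervalIntegral.integral_deriv_eq_sub (fun x _ => hf'd x)
        (hf''c.intervalIntegrable _ _)]
  -- pointwise identification on the three regions
  have hg_Iic : EqOn
      (fun z => ((σ ^ 2 / 2) * deriv (deriv f) z
          + (if γ < z then lam * (f γ - f z) else 0)
          + (if z < -γ then lam * (f (-γ) - f z) else 0)) * p z)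
      (fun z => (σ ^ 2 / 2 * deriv (deriv f) z + lam * (f (-γ) - f z)) * wm z) (Iic (-γ)) := by
    intro z hz
    simp only [mem_Iic] at hz
    simp only
    rcases eq_or_lt_of_le hz with rfl | hz'
    · rw [hp (-γ), if_pos (show |(-γ)| ≤ γ by simp [abs_of_pos hγ]),
        if_neg (show ¬ γ < -γ by linarith), if_neg (show ¬ -γ < -γ by linarith),
        hwmγ, ← hc0_def]
      ring
    · have habs : |z| = -z := abs_of_neg (by linarith)
      rw [hp z, if_neg (show ¬ |z| ≤ γ by rw [habs]; push_neg; linarith),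
        if_neg (show ¬ γ < z by linarith), if_pos hz', habs, ← ha_def,
        show -a * (-z - γ) = a * (z + γ) from by ring, hc0]
      simp only [hwm]
      ring
  have hg_mid : EqOn
      (fun z => ((σ ^ 2 / 2) * deriv (deriv f) z
          + (if γ < z then lam * (f γ - f z) else 0)
          + (if z < -γ then lam * (f (-γ) - f z) else 0)) * p z)
      (fun z => (σ ^ 2 / 2 * deriv (deriv f) z) * c0) (Ioc (-γ) γ) := by
    intro z hz
    obtain ⟨h1, h2⟩ := hz
    simp only
    rw [hp z, if_pos (abs_le.mpr ⟨by linarith, h2⟩),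
      if_neg (show ¬ γ < z by linarith), if_neg (show ¬ z < -γ by linarith), ← hc0_def]
    ring
  have hg_Ioi : EqOn
      (fun z => ((σ ^ 2 / 2) * deriv (deriv f) z
          + (if γ < z then lam * (f γ - f z) else 0)
          + (if z < -γ then lam * (f (-γ) - f z) else 0)) * p z)
      (fun z => (σ ^ 2 / 2 * deriv (deriv f) z + lam * (f γ - f z)) * wp z) (Ioi γ) := by
    intro z hz
    simp only [mem_Ioi] at hz
    have habs : |z| = z := abs_of_pos (by linarith)
    simp only
    rw [hp z, if_neg (show ¬ |z| ≤ γ by rw [habs]; push_neg; linarith),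
      if_pos hz, if_neg (show ¬ z < -γ by linarith), habs, ← ha_def, hc0]
    simp only [hwp]
    ring
  -- assemble
  have hle : -γ ≤ γ := by linarith
  have hIic_g : IntegrableOn
      (fun z => ((σ ^ 2 / 2) * deriv (deriv f) z
          + (if γ < z then lam * (f γ - f z) else 0)
          + (if z < -γ then lam * (f (-γ) - f z) else 0)) * p z) (Iic (-γ)) :=
    IntegrableOn.congr_fun hIic_int hg_Iic.symm measurableSet_Iic
  have hmid_g : IntegrableOn
      (fun z => ((σ ^ 2 / 2) * deriv (deriv f) z
          + (if γ < z then lam * (f γ - f z) else 0)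
          + (if z < -γ then lam * (f (-γ) - f z) else 0)) * p z) (Ioc (-γ) γ) :=
    IntegrableOn.congr_fun hmid_int hg_mid.symm measurableSet_Ioc
  have hIoi_g : IntegrableOn
      (fun z => ((σ ^ 2 / 2) * deriv (deriv f) z
          + (if γ < z then lam * (f γ - f z) else 0)
          + (if z < -γ then lam * (f (-γ) - f z) else 0)) * p z) (Ioi γ) :=
    IntegrableOn.congr_fun hIoi_int hg_Ioi.symm measurableSet_Ioi
  have hIoi_g' : IntegrableOn
      (fun z => ((σ ^ 2 / 2) * deriv (deriv f) z
          + (if γ < z then lam * (f γ - f z) else 0)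
          + (if z < -γ then lam * (f (-γ) - f z) else 0)) * p z) (Ioi (-γ)) := by
    have := hmid_g.union hIoi_g
    rwa [Ioc_union_Ioi_eq_Ioi hle] at this
  rw [← intervalIntegral.integral_Iic_add_Ioi hIic_g hIoi_g', ← Ioc_union_Ioi_eq_Ioi hle,
    setIntegral_union Ioc_disjoint_Ioi_same measurableSet_Ioi hmid_g hIoi_g,
    setIntegral_congr_fun measurableSet_Iic hg_Iic,
    setIntegral_congr_fun measurableSet_Ioc hg_mid,
    setIntegral_congr_fun measurableSet_Ioi hg_Ioi,
    hIic_val, hmid_val, hIoi_val]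
  ring
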